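/- Let G and H be finite groups and F: Fin_G → Fin_H a functor. Then F preserves pullbacks, epimorphisms, and finite coproducts if and only if F is naturally isomorphic to −×_G X for some X in ^G Fin_H, where (−×_G X)(S) = (S × X)/~ with ~ generated by (sg, x) ~ (s, gx) and right H-action induced from X. Moreover, X ↦ −×_G X induces an equivalence of categories ^G Fin_H ≃ Fun_pce(Fin_G, Fin_H). -/

import Mathlib

open CategoryTheory CategoryTheory.Limits MulOpposite

namespace Paper

/-- A functor preserves pullbacks, finite coproducts, and epimorphisms. -/
def PreservesPCE {C : Type*} {D : Type*} [Category C] [Category D] (F : C ⥤ D) : Prop :=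
  Nonempty (PreservesLimitsOfShape WalkingCospan F) ∧
  (∀ (J : Type) [Finite J], Nonempty (PreservesColimitsOfShape (Discrete J) F)) ∧
  F.PreservesEpimorphisms

/-- `Fun_pce C D`: the full subcategory of the functor category spanned by the functors
preserving pullbacks, finite coproducts and epimorphisms. -/
abbrev FunPCE (C : Type*) (D : Type*) [Category C] [Category D] :=
  ObjectProperty.FullSubcategory (fun F : C ⥤ D => PreservesPCE F)

/-- Finite sets with an action of the monoid `M`. -/
abbrev ActCat (M : Type) [Monoid M] := Action FintypeCat.{0} (MonCat.of M)

/-- `Fin_G`: finite right `G`-sets (encoded as left `Gᵐᵒᵖ`-actions). -/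
abbrev FinRight (G : Type) [Group G] := ActCat Gᵐᵒᵖ

/-- `^G Fin`: the category of finite *free* left `G`-sets. -/
abbrev FinFreeL (G : Type) [Group G] :=
  ObjectProperty.FullSubcategory (fun X : ActCat G => ∀ (g : G) (x : X.V), ConcreteCategory.hom (X.ρ g) x = x → g = 1)

/-- Finite `(G,H)`-bisets: a left `G`-action and a commuting right `H`-action. -/
abbrev BiAct (G H : Type) [Group G] [Group H] := ActCat (G × Hᵐᵒᵖ)

/-- The left `G`-action of a `(G,H)`-biset is free. -/
def LeftFree {G H : Type} [Group G] [Group H] (X : BiAct G H) : Prop :=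
  ∀ (g : G) (x : X.V), ConcreteCategory.hom (X.ρ (g, 1)) x = x → g = 1

/-- `^G Fin_H`: finite `(G,H)`-bisets whose left `G`-action is free. -/
abbrev BiFin (G H : Type) [Group G] [Group H] :=
  ObjectProperty.FullSubcategory (fun X : BiAct G H => LeftFree X)

/-- The separable `(G,H)`-biset `G × T` attached to a finite right `H`-set `T`,
with actions `g • (g', t) • h = (g * g', t • h)`. -/
noncomputable def sepBiset (G H : Type) [Group G] [Group H] [Fintype G]
    (T : ActCat Hᵐᵒᵖ) : BiAct G H where
  V := FintypeCat.of (G × T.V)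
  ρ :=
    { toFun := fun (m : G × Hᵐᵒᵖ) => FintypeCat.homMk fun (p : G × T.V) => (m.1 * p.1, ConcreteCategory.hom (T.ρ m.2) p.2)
      map_one' := by
        apply FintypeCat.hom_ext; intro p
        show ((1 : G) * p.1, ConcreteCategory.hom (T.ρ 1) p.2) = p
        simp
      map_mul' := by
        intro a b
        apply FintypeCat.hom_ext; intro p
        show ((a.1 * b.1) * p.1, ConcreteCategory.hom (T.ρ (a.2 * b.2)) p.2)
          = (a.1 * (b.1 * p.1), ConcreteCategory.hom (T.ρ a.2) (ConcreteCategory.hom (T.ρ b.2) p.2))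
        rw [mul_assoc, map_mul]
        rfl }

/-- A `(G,H)`-biset is separable if it is isomorphic to `G × T`
for some finite right `H`-set `T`. -/
def Separable (G H : Type) [Group G] [Group H] [Fintype G] (X : BiAct G H) : Prop :=
  ∃ T : ActCat Hᵐᵒᵖ, Nonempty (X ≅ sepBiset G H T)

/-- `(^G Fin_H)^sep`: the full subcategory of separable bisets. -/
abbrev SepCat (G H : Type) [Group G] [Group H] [Fintype G] :=
  ObjectProperty.FullSubcategory (fun X : BiFin G H => Separable G H X.obj)

variable {G H : Type} [Group G] [Group H]

/-- The relation generating `X ×_{(H,G)} Y`: `(x·g, y) ~ (x, g·y)` and `(h·x, y) ~ (x, y·h)`. -/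
def pairRel (X : BiAct H G) (Y : BiAct G H) : X.V × Y.V → X.V × Y.V → Prop :=
  fun p q =>
    (∃ g : G, p.1 = ConcreteCategory.hom (X.ρ (1, op g)) q.1 ∧ q.2 = ConcreteCategory.hom (Y.ρ (g, 1)) p.2) ∨
    (∃ h : H, q.1 = ConcreteCategory.hom (X.ρ (h, 1)) p.1 ∧ p.2 = ConcreteCategory.hom (Y.ρ (1, op h)) q.2)

/-- `X ×_{(H,G)} Y`: the quotient of `X × Y` by the equivalence relation generated by
`(x·g, y) ~ (x, g·y)` and `(h·x, y) ~ (x, y·h)`. -/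
def PairSet (X : BiAct H G) (Y : BiAct G H) : Type := Quot (pairRel X Y)

instance (X : BiAct H G) (Y : BiAct G H) : Finite (PairSet X Y) :=
  Quot.finite _

/-- `X ×_{(H,G)} Y` as an object of the category of finite sets. -/
noncomputable def pairObj (X : BiAct H G) (Y : BiAct G H) : FintypeCat :=
  letI := Fintype.ofFinite (PairSet X Y)
  FintypeCat.of (PairSet X Y)

/-- Functoriality of `X ×_{(H,G)} Y` in `X`. -/
noncomputable def pairMapFst {X X' : BiAct H G} (f : X ⟶ X') (Y : BiAct G H) :
    pairObj X Y ⟶ pairObj X' Y :=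
  FintypeCat.homMk <| Quot.map (fun p => (f.hom p.1, p.2)) (by
    rintro ⟨x, y⟩ ⟨x', y'⟩ (⟨g, h1, h2⟩ | ⟨h, h1, h2⟩)
    · left
      refine ⟨g, ?_, h2⟩
      have := ConcreteCategory.congr_hom (f.comm (1, op g)) x'
      simp only [FintypeCat.comp_apply] at this
      dsimp only at h1 ⊢
      rw [h1]; exact this
    · right
      refine ⟨h, ?_, h2⟩
      have := ConcreteCategory.congr_hom (f.comm (h, 1)) x
      simp only [FintypeCat.comp_apply] at this
      dsimp only at h1 ⊢
      rw [h1]; exact this)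

/-- Functoriality of `X ×_{(H,G)} Y` in `Y`. -/
noncomputable def pairMapSnd (X : BiAct H G) {Y Y' : BiAct G H} (f : Y ⟶ Y') :
    pairObj X Y ⟶ pairObj X Y' :=
  FintypeCat.homMk <| Quot.map (fun p => (p.1, f.hom p.2)) (by
    rintro ⟨x, y⟩ ⟨x', y'⟩ (⟨g, h1, h2⟩ | ⟨h, h1, h2⟩)
    · left
      refine ⟨g, h1, ?_⟩
      have := ConcreteCategory.congr_hom (f.comm (g, 1)) y
      simp only [FintypeCat.comp_apply] at this
      dsimp only at h2 ⊢
      rw [h2]; exact this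
    · right
      refine ⟨h, h1, ?_⟩
      have := ConcreteCategory.congr_hom (f.comm (1, op h)) y'
      simp only [FintypeCat.comp_apply] at this
      dsimp only at h2 ⊢
      rw [h2]; exact this)

/-- For a fixed biset `X`, the functor `X ×_{(H,G)} -` on all of `^G Fin_H`. -/
noncomputable def pairFstFunctorRaw (X : BiAct H G) : BiAct G H ⥤ FintypeCat where
  obj Y := pairObj X Y
  map f := pairMapSnd X f
  map_id Y := by
    apply FintypeCat.hom_ext; intro q
    induction q using Quot.ind
    rfl
  map_comp f g := by
    apply FintypeCat.hom_ext; intro q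
    induction q using Quot.ind
    rfl

/-- For a fixed biset `X` in `^H Fin_G`, the functor `X ×_{(H,G)} -` on `(^G Fin_H)^sep`. -/
noncomputable def pairFstFunctor (G H : Type) [Group G] [Group H] [Fintype G]
    (X : BiAct H G) : SepCat G H ⥤ FintypeCat :=
  ObjectProperty.ι _ ⋙ ObjectProperty.ι _ ⋙ pairFstFunctorRaw X

/-- For a fixed biset `Y` in `^G Fin_H`, the functor `- ×_{(H,G)} Y` on `^H Fin_G`. -/
noncomputable def pairSndFunctor (G H : Type) [Group G] [Group H]
    (Y : BiAct G H) : BiFin H G ⥤ FintypeCat where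
  obj X := pairObj X.obj Y
  map f := pairMapFst f.hom Y
  map_id X := by
    apply FintypeCat.hom_ext; intro q
    induction q using Quot.ind
    rfl
  map_comp f g := by
    apply FintypeCat.hom_ext; intro q
    induction q using Quot.ind
    rfl

variable (G H) [Fintype G] [Fintype H]

/-- The functor `(^G Fin_H)^sep ⟶ Fun_pce(^H Fin_G, Fin)` induced by the pairing. -/
noncomputable def pairingPhi
    (h : ∀ Y : SepCat G H, PreservesPCE (pairSndFunctor G H Y.obj.obj)) :
    SepCat G H ⥤ FunPCE (BiFin H G) FintypeCat where
  obj Y := ⟨pairSndFunctor G H Y.obj.obj, h Y⟩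
  map {Y Y'} f :=
    { hom :=
      { app := fun X => pairMapSnd X.obj f.hom.hom
        naturality := by
          intro X X' g
          apply FintypeCat.hom_ext; intro q
          induction q using Quot.ind
          rfl } }
  map_id Y := by
    apply ObjectProperty.hom_ext
    apply NatTrans.ext
    funext X
    apply FintypeCat.hom_ext; intro q
    induction q using Quot.ind
    rfl
  map_comp f g := by
    apply ObjectProperty.hom_ext
    apply NatTrans.ext
    funext X
    apply FintypeCat.hom_ext; intro q
    induction q using Quot.ind
    rfl

/-- The functor `^H Fin_G ⟶ Fun_pce((^G Fin_H)^sep, Fin)` induced by the pairing. -/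
noncomputable def pairingPsi
    (h : ∀ X : BiFin H G, PreservesPCE (pairFstFunctor G H X.obj)) :
    BiFin H G ⥤ FunPCE (SepCat G H) FintypeCat where
  obj X := ⟨pairFstFunctor G H X.obj, h X⟩
  map {X X'} f :=
    { hom :=
      { app := fun Y => pairMapFst f.hom Y.obj.obj
        naturality := by
          intro Y Y' g
          apply FintypeCat.hom_ext; intro q
          induction q using Quot.ind
          rfl } }
  map_id X := by
    apply ObjectProperty.hom_ext
    apply NatTrans.ext
    funext Y
    apply FintypeCat.hom_ext; intro q
    induction q using Quot.ind
    rfl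
  map_comp f g := by
    apply ObjectProperty.hom_ext
    apply NatTrans.ext
    funext Y
    apply FintypeCat.hom_ext; intro q
    induction q using Quot.ind
    rfl

end Paper

namespace Paper

lemma actMul {M : Type} [Monoid M] (X : ActCat M) (a b : M) (v : X.V) :
    ConcreteCategory.hom (X.ρ (a * b)) v = ConcreteCategory.hom (X.ρ a) (ConcreteCategory.hom (X.ρ b) v) := by
  rw [map_mul]; rfl

variable {G H : Type} [Group G] [Group H]

/-- The relation generating `S ×_G X` for a right `G`-set `S` and a `(G,H)`-biset `X`:
`(s·g, x) ~ (s, g·x)`. -/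
def tensRel (S : FinRight G) (X : BiAct G H) : S.V × X.V → S.V × X.V → Prop :=
  fun p q => ∃ g : G, p.1 = ConcreteCategory.hom (S.ρ (op g)) q.1 ∧ q.2 = ConcreteCategory.hom (X.ρ (g, 1)) p.2

/-- `S ×_G X = (S × X)/~` with `~` generated by `(s·g, x) ~ (s, g·x)`. -/
def TensSet (S : FinRight G) (X : BiAct G H) : Type := Quot (tensRel S X)

instance (S : FinRight G) (X : BiAct G H) : Finite (TensSet S X) := Quot.finite _

/-- `S ×_G X` as a finite right `H`-set, with the right `H`-action induced from `X`. -/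
noncomputable def tensObj (S : FinRight G) (X : BiAct G H) : FinRight H where
  V := letI := Fintype.ofFinite (TensSet S X); FintypeCat.of (TensSet S X)
  ρ :=
    { toFun := fun oh => FintypeCat.homMk <| Quot.map (fun p => (p.1, ConcreteCategory.hom (X.ρ (1, oh)) p.2)) (by
        rintro ⟨s, x⟩ ⟨s', x'⟩ ⟨g, h1, h2⟩
        refine ⟨g, h1, ?_⟩
        dsimp only at h2 ⊢
        rw [h2, ← actMul, ← actMul]
        congr 1
        simp [Prod.ext_iff])
      map_one' := by
        apply FintypeCat.hom_ext; intro q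
        induction q using Quot.ind
        show Quot.mk _ (_, ConcreteCategory.hom (X.ρ 1) _) = Quot.mk _ _
        rw [Action.ρ_one]
        rfl
      map_mul' := by
        intro a b
        apply FintypeCat.hom_ext; intro q
        induction q using Quot.ind
        show Quot.mk _ (_, ConcreteCategory.hom (X.ρ (1, a * b)) _) = Quot.mk _ (_, ConcreteCategory.hom (X.ρ (1, a)) (ConcreteCategory.hom (X.ρ (1, b)) _))
        rw [show ((1 : G), a * b) = ((1 : G), a) * ((1 : G), b) by simp, actMul] }

/-- `- ×_G X : Fin_G → Fin_H` for a `(G,H)`-biset `X`. -/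
noncomputable def tensFunctor (G H : Type) [Group G] [Group H] (X : BiAct G H) :
    FinRight G ⥤ FinRight H where
  obj S := tensObj S X
  map {S S'} f :=
    { hom := FintypeCat.homMk <| Quot.map (fun p => (f.hom p.1, p.2)) (by
        rintro ⟨s, x⟩ ⟨s', x'⟩ ⟨g, h1, h2⟩
        refine ⟨g, ?_, h2⟩
        have := ConcreteCategory.congr_hom (f.comm (op g)) s'
        simp only [FintypeCat.comp_apply] at this
        dsimp only at h1 ⊢
        rw [h1]; exact this)
      comm := by
        intro oh
        apply FintypeCat.hom_ext; intro q
        induction q using Quot.ind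
        rfl }
  map_id S := by
    apply Action.hom_ext
    apply FintypeCat.hom_ext; intro q; induction q using Quot.ind; rfl
  map_comp f g := by
    apply Action.hom_ext
    apply FintypeCat.hom_ext; intro q; induction q using Quot.ind; rfl

/-- The functor `^G Fin_H ⟶ Fun_pce(Fin_G, Fin_H)`, `X ↦ - ×_G X`. -/
noncomputable def tensEquivFunctor (G H : Type) [Group G] [Group H]
    (h : ∀ X : BiFin G H, PreservesPCE (tensFunctor G H X.obj)) :
    BiFin G H ⥤ FunPCE (FinRight G) (FinRight H) where
  obj X := ⟨tensFunctor G H X.obj, h X⟩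
  map {X X'} φ :=
    { hom :=
      { app := fun S =>
          { hom := FintypeCat.homMk <| Quot.map (fun p => (p.1, φ.hom.hom p.2)) (by
              rintro ⟨s, x⟩ ⟨s', x'⟩ ⟨g, h1, h2⟩
              refine ⟨g, h1, ?_⟩
              have := ConcreteCategory.congr_hom (φ.hom.comm (g, 1)) x
              simp only [FintypeCat.comp_apply] at this
              dsimp only at h2 ⊢
              rw [h2]; exact this)
            comm := by
              intro oh
              apply FintypeCat.hom_ext; intro q
              induction q using Quot.ind
              rename_i p
              have hc := ConcreteCategory.congr_hom (φ.hom.comm ((1 : G), oh)) p.2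
              simp only [FintypeCat.comp_apply] at hc
              show Quot.mk _ (p.1, φ.hom.hom (ConcreteCategory.hom (X.obj.ρ (1, oh)) p.2))
                = Quot.mk _ (p.1, ConcreteCategory.hom (X'.obj.ρ (1, oh)) (φ.hom.hom p.2))
              rw [hc] }
        naturality := by
          intro S S' f
          apply Action.hom_ext
          apply FintypeCat.hom_ext; intro q; induction q using Quot.ind; rfl } }
  map_id X := by
    apply ObjectProperty.hom_ext
    apply NatTrans.ext
    funext S
    apply Action.hom_ext
    apply FintypeCat.hom_ext; intro q; induction q using Quot.ind; rfl
  map_comp f g := by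
    apply ObjectProperty.hom_ext
    apply NatTrans.ext
    funext S
    apply Action.hom_ext
    apply FintypeCat.hom_ext; intro q; induction q using Quot.ind; rfl

instance instCoeFunEndFintypeCat (A : FintypeCat.{0}) : CoeFun (End A) (fun _ => A → A) :=
  ⟨fun f => ConcreteCategory.hom f⟩

-- PAPER-INFRA
/-! ### Infrastructure on `ActCat M` -/

section Infra

variable {M N : Type} [Monoid M] [Monoid N]

lemma actOne (X : ActCat M) (v : X.V) : X.ρ 1 v = v := by
  rw [Action.ρ_one]; rfl

lemma actHomComm {A B : ActCat M} (f : A ⟶ B) (m : M) (v : A.V) :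
    f.hom (A.ρ m v) = B.ρ m (f.hom v) := by
  have := ConcreteCategory.congr_hom (f.comm m) v
  simp only [FintypeCat.comp_apply] at this
  exact this

lemma actCompApp {A B C : ActCat M} (f : A ⟶ B) (g : B ⟶ C) (v : A.V) :
    (f ≫ g).hom v = g.hom (f.hom v) := rfl

lemma actEqHomApp {A B : ActCat M} {f g : A ⟶ B} (h : f = g) (v : A.V) :
    f.hom v = g.hom v := by rw [h]

/-- A bijective morphism of finite `M`-sets is an isomorphism. -/
noncomputable def actIsoOfBijective {A B : ActCat M} (f : A ⟶ B)
    (hf : Function.Bijective f.hom) : A ≅ B where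
  hom := f
  inv :=
    { hom := FintypeCat.homMk fun b => (Equiv.ofBijective f.hom hf).symm b
      comm := by
        intro m
        apply FintypeCat.hom_ext; intro b
        show (Equiv.ofBijective f.hom hf).symm (B.ρ m b)
          = A.ρ m ((Equiv.ofBijective f.hom hf).symm b)
        apply hf.injective
        rw [show f.hom ((Equiv.ofBijective f.hom hf).symm (B.ρ m b)) = B.ρ m b from
          (Equiv.ofBijective f.hom hf).apply_symm_apply _]
        rw [actHomComm f m]
        rw [show f.hom ((Equiv.ofBijective f.hom hf).symm b) = b from
          (Equiv.ofBijective f.hom hf).apply_symm_apply _] }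
  hom_inv_id := by
    apply Action.hom_ext
    apply FintypeCat.hom_ext; intro a
    show (Equiv.ofBijective f.hom hf).symm (f.hom a) = a
    exact (Equiv.ofBijective f.hom hf).symm_apply_apply a
  inv_hom_id := by
    apply Action.hom_ext
    apply FintypeCat.hom_ext; intro b
    show f.hom ((Equiv.ofBijective f.hom hf).symm b) = b
    exact (Equiv.ofBijective f.hom hf).apply_symm_apply b

lemma actBijective_of_iso {A B : ActCat M} (e : A ≅ B) : Function.Bijective e.hom.hom := by
  constructor
  · intro a b hab
    have h1 : e.inv.hom (e.hom.hom a) = a := actEqHomApp e.hom_inv_id a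
    have h2 : e.inv.hom (e.hom.hom b) = b := actEqHomApp e.hom_inv_id b
    rw [← h1, ← h2, hab]
  · intro b
    exact ⟨e.inv.hom b, actEqHomApp e.inv_hom_id b⟩

noncomputable instance : PreservesColimitsOfShape WalkingSpan (forget (ActCat M)) := by
  show PreservesColimitsOfShape WalkingSpan
    (Action.forget FintypeCat.{0} (MonCat.of M) ⋙ forget FintypeCat)
  infer_instance

lemma actEpi_iff_surjective {A B : ActCat M} (f : A ⟶ B) :
    Epi f ↔ Function.Surjective f.hom := by
  rw [ConcreteCategory.epi_iff_surjective_of_preservesPushout f]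
  rfl

/-! #### Concrete pullbacks -/

def cptT {A B C : ActCat M} (f : A ⟶ C) (g : B ⟶ C) : Type :=
  { p : A.V × B.V // f.hom p.1 = g.hom p.2 }

instance {A B C : ActCat M} (f : A ⟶ C) (g : B ⟶ C) : Finite (cptT f g) := by
  unfold cptT; infer_instance

/-- The concrete pullback in `ActCat M`. -/
noncomputable def cpt {A B C : ActCat M} (f : A ⟶ C) (g : B ⟶ C) : ActCat M where
  V := letI := Fintype.ofFinite (cptT f g); FintypeCat.of (cptT f g)
  ρ :=
    { toFun := fun m => FintypeCat.homMk fun p => ⟨(A.ρ m p.1.1, B.ρ m p.1.2), by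
        rw [actHomComm f m, actHomComm g m, p.2]⟩
      map_one' := by
        apply FintypeCat.hom_ext; intro p
        apply Subtype.ext
        show (A.ρ 1 p.1.1, B.ρ 1 p.1.2) = p.1
        rw [actOne, actOne]
      map_mul' := by
        intro a b
        apply FintypeCat.hom_ext; intro p
        apply Subtype.ext
        show (A.ρ (a * b) p.1.1, B.ρ (a * b) p.1.2) = _
        rw [actMul, actMul]
        rfl }

noncomputable def cptFst {A B C : ActCat M} (f : A ⟶ C) (g : B ⟶ C) : cpt f g ⟶ A where
  hom := FintypeCat.homMk fun p => p.1.1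
  comm := fun _ => rfl

noncomputable def cptSnd {A B C : ActCat M} (f : A ⟶ C) (g : B ⟶ C) : cpt f g ⟶ B where
  hom := FintypeCat.homMk fun p => p.1.2
  comm := fun _ => rfl

lemma cptCond {A B C : ActCat M} (f : A ⟶ C) (g : B ⟶ C) :
    cptFst f g ≫ f = cptSnd f g ≫ g := by
  apply Action.hom_ext
  apply FintypeCat.hom_ext; intro p
  exact p.2

noncomputable abbrev cptCone {A B C : ActCat M} (f : A ⟶ C) (g : B ⟶ C) :
    PullbackCone f g :=
  PullbackCone.mk (cptFst f g) (cptSnd f g) (cptCond f g)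

noncomputable def cptIsLimit {A B C : ActCat M} (f : A ⟶ C) (g : B ⟶ C) :
    IsLimit (cptCone f g) := by
  refine PullbackCone.IsLimit.mk (cptCond f g)
    (fun s => { hom := FintypeCat.homMk fun v => ⟨(s.fst.hom v, s.snd.hom v), ?_⟩, comm := ?_ })
    (fun s => ?_) (fun s => ?_) (fun s m h1 h2 => ?_)
  · exact actEqHomApp s.condition v
  · intro m
    apply FintypeCat.hom_ext; intro v
    apply Subtype.ext
    show (s.fst.hom (s.pt.ρ m v), s.snd.hom (s.pt.ρ m v)) = _
    rw [actHomComm s.fst m, actHomComm s.snd m]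
    rfl
  · apply Action.hom_ext; apply FintypeCat.hom_ext; intro v; rfl
  · apply Action.hom_ext; apply FintypeCat.hom_ext; intro v; rfl
  · apply Action.hom_ext
    apply FintypeCat.hom_ext; intro v
    apply Subtype.ext
    have e1 := actEqHomApp h1 v
    have e2 := actEqHomApp h2 v
    exact Prod.ext_iff.mpr ⟨e1, e2⟩

/-! #### Concrete finite coproducts -/

def ccT {J : Type} (A : J → ActCat M) : Type := Σ j, (A j).V

instance {J : Type} [Finite J] (A : J → ActCat M) : Finite (ccT A) := by
  unfold ccT; infer_instance

/-- The concrete coproduct in `ActCat M`. -/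
noncomputable def cc {J : Type} [Finite J] (A : J → ActCat M) : ActCat M where
  V := letI := Fintype.ofFinite (ccT A); FintypeCat.of (ccT A)
  ρ :=
    { toFun := fun m => FintypeCat.homMk fun p => ⟨p.1, (A p.1).ρ m p.2⟩
      map_one' := by
        apply FintypeCat.hom_ext; intro p
        show (⟨p.1, (A p.1).ρ 1 p.2⟩ : ccT A) = p
        rw [actOne]
        rfl
      map_mul' := by
        intro a b
        apply FintypeCat.hom_ext; intro p
        show (⟨p.1, (A p.1).ρ (a * b) p.2⟩ : ccT A) = ⟨p.1, (A p.1).ρ a ((A p.1).ρ b p.2)⟩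
        rw [actMul] }

noncomputable def ccIncl {J : Type} [Finite J] (A : J → ActCat M) (j : J) : A j ⟶ cc A where
  hom := FintypeCat.homMk fun v => ⟨j, v⟩
  comm := fun _ => rfl

noncomputable abbrev ccCofan {J : Type} [Finite J] (A : J → ActCat M) : Cofan A :=
  Cofan.mk (cc A) (ccIncl A)

noncomputable def ccIsColimit {J : Type} [Finite J] (A : J → ActCat M) :
    IsColimit (ccCofan A) := by
  refine mkCofanColimit _
    (fun t => { hom := FintypeCat.homMk fun p => (t.inj p.1).hom p.2, comm := ?_ })
    (fun t j => ?_) (fun t m hm => ?_)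
  · intro m
    apply FintypeCat.hom_ext; intro p
    show (t.inj p.1).hom ((A p.1).ρ m p.2) = _
    rw [actHomComm (t.inj p.1) m]
    rfl
  · apply Action.hom_ext; apply FintypeCat.hom_ext; intro v; rfl
  · apply Action.hom_ext
    apply FintypeCat.hom_ext; intro p
    obtain ⟨j, v⟩ := p
    exact actEqHomApp (hm j) v

/-! #### Comparison morphisms and preservation criteria -/

noncomputable def cptCompare (FF : ActCat M ⥤ ActCat N) {A B C : ActCat M} (f : A ⟶ C) (g : B ⟶ C) :
    FF.obj (cpt f g) ⟶ cpt (FF.map f) (FF.map g) where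
  hom := FintypeCat.homMk fun p => ⟨((FF.map (cptFst f g)).hom p, (FF.map (cptSnd f g)).hom p), by
    have h : FF.map (cptFst f g) ≫ FF.map f = FF.map (cptSnd f g) ≫ FF.map g := by
      rw [← FF.map_comp, ← FF.map_comp, cptCond]
    exact actEqHomApp h p⟩
  comm := by
    intro m
    apply FintypeCat.hom_ext; intro p
    apply Subtype.ext
    show ((FF.map (cptFst f g)).hom ((FF.obj (cpt f g)).ρ m p),
          (FF.map (cptSnd f g)).hom ((FF.obj (cpt f g)).ρ m p)) = _
    rw [actHomComm (FF.map (cptFst f g)) m, actHomComm (FF.map (cptSnd f g)) m]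
    rfl

noncomputable def ccCompare (FF : ActCat M ⥤ ActCat N) {J : Type} [Finite J] (A : J → ActCat M) :
    cc (fun j => FF.obj (A j)) ⟶ FF.obj (cc A) where
  hom := FintypeCat.homMk fun p => (FF.map (ccIncl A p.1)).hom p.2
  comm := by
    intro m
    apply FintypeCat.hom_ext; intro p
    show (FF.map (ccIncl A p.1)).hom ((FF.obj (A p.1)).ρ m p.2) = _
    rw [actHomComm (FF.map (ccIncl A p.1)) m]
    rfl

lemma actPreservesPullbacks_of_compare (FF : ActCat M ⥤ ActCat N)
    (hbij : ∀ (A B C : ActCat M) (f : A ⟶ C) (g : B ⟶ C),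
      Function.Bijective (cptCompare FF f g).hom) :
    PreservesLimitsOfShape WalkingCospan FF := by
  have key : ∀ (A B C : ActCat M) (f : A ⟶ C) (g : B ⟶ C),
      PreservesLimit (cospan f g) FF := by
    intro A B C f g
    apply preservesLimit_of_preserves_limit_cone (cptIsLimit f g)
    refine (isLimitMapConePullbackConeEquiv FF (cptCond f g)).symm ?_
    refine (cptIsLimit (FF.map f) (FF.map g)).ofIsoLimit ?_
    refine (PullbackCone.ext (actIsoOfBijective _ (hbij A B C f g)) ?_ ?_).symm
    · apply Action.hom_ext; apply FintypeCat.hom_ext; intro p; rfl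
    · apply Action.hom_ext; apply FintypeCat.hom_ext; intro p; rfl
  exact ⟨fun {K} => preservesLimit_of_iso_diagram FF (diagramIsoCospan K).symm⟩

lemma actPreservesCoproducts_of_compare (FF : ActCat M ⥤ ActCat N) {J : Type} [Finite J]
    (hbij : ∀ A : J → ActCat M, Function.Bijective (ccCompare FF A).hom) :
    PreservesColimitsOfShape (Discrete J) FF := by
  have key : ∀ A : J → ActCat M, PreservesColimit (Discrete.functor A) FF := by
    intro A
    apply preservesColimit_of_preserves_colimit_cocone (ccIsColimit A)
    refine (isColimitMapCoconeCofanMkEquiv FF A (ccIncl A)).symm ?_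
    refine (ccIsColimit (fun j => FF.obj (A j))).ofIsoColimit ?_
    refine Cocones.ext (actIsoOfBijective _ (hbij A)) ?_
    rintro ⟨j⟩
    apply Action.hom_ext; apply FintypeCat.hom_ext; intro v; rfl
  refine ⟨fun {K} => ?_⟩
  have := key (K.obj ∘ Discrete.mk)
  exact preservesColimit_of_iso_diagram FF Discrete.natIsoFunctor.symm

lemma cptCompare_bijective (FF : ActCat M ⥤ ActCat N)
    [PreservesLimitsOfShape WalkingCospan FF]
    {A B C : ActCat M} (f : A ⟶ C) (g : B ⟶ C) :
    Function.Bijective (cptCompare FF f g).hom := by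
  have l1 := isLimitPullbackConeMapOfIsLimit FF (cptCond f g) (cptIsLimit f g)
  have l2 := cptIsLimit (FF.map f) (FF.map g)
  have hcomp : (cptCompare FF f g).hom = (l1.conePointUniqueUpToIso l2).hom.hom := by
    apply FintypeCat.hom_ext; intro p
    apply Subtype.ext
    have h1 := actEqHomApp (l1.conePointUniqueUpToIso_hom_comp l2 WalkingCospan.left) p
    have h2 := actEqHomApp (l1.conePointUniqueUpToIso_hom_comp l2 WalkingCospan.right) p
    exact Prod.ext_iff.mpr ⟨h1.symm, h2.symm⟩
  rw [hcomp]
  exact actBijective_of_iso (l1.conePointUniqueUpToIso l2)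

lemma ccCompare_bijective (FF : ActCat M ⥤ ActCat N) {J : Type} [Finite J]
    [PreservesColimitsOfShape (Discrete J) FF] (A : J → ActCat M) :
    Function.Bijective (ccCompare FF A).hom := by
  have l1 : IsColimit (Cofan.mk (FF.obj (cc A)) fun j => FF.map (ccIncl A j)) :=
    isColimitMapCoconeCofanMkEquiv FF A (ccIncl A) (isColimitOfPreserves FF (ccIsColimit A))
  have l2 := ccIsColimit (fun j => FF.obj (A j))
  have hcomp : (ccCompare FF A).hom = (l2.coconePointUniqueUpToIso l1).hom.hom := by
    apply FintypeCat.hom_ext; intro p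
    obtain ⟨j, v⟩ := p
    exact (actEqHomApp (l2.comp_coconePointUniqueUpToIso_hom l1 ⟨j⟩) v).symm
  rw [hcomp]
  exact actBijective_of_iso (l2.coconePointUniqueUpToIso l1)

end Infra

-- PAPER-TENSOR
/-! ### The tensor relation is an equivalence relation -/

section TensorRel

variable {G H : Type} [Group G] [Group H]

lemma biActPair (X : BiAct G H) (g g' : G) (v : X.V) :
    X.ρ (g, (1 : Hᵐᵒᵖ)) (X.ρ (g', 1) v) = X.ρ (g * g', 1) v := by
  rw [← actMul, Prod.mk_mul_mk, one_mul]

lemma tensRel_refl (S : FinRight G) (X : BiAct G H) (p : S.V × X.V) : tensRel S X p p :=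
  ⟨1, by rw [op_one, actOne], by show p.2 = X.ρ 1 p.2; rw [actOne]⟩

lemma tensRel_symm {S : FinRight G} {X : BiAct G H} {p q : S.V × X.V}
    (h : tensRel S X p q) : tensRel S X q p := by
  obtain ⟨g, h1, h2⟩ := h
  refine ⟨g⁻¹, ?_, ?_⟩
  · rw [h1, ← actMul, ← op_mul, mul_inv_cancel, op_one, actOne]
  · rw [h2, biActPair, inv_mul_cancel]
    show p.2 = X.ρ 1 p.2
    rw [actOne]

lemma tensRel_trans {S : FinRight G} {X : BiAct G H} {p q r : S.V × X.V}
    (h : tensRel S X p q) (h' : tensRel S X q r) : tensRel S X p r := by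
  obtain ⟨g, h1, h2⟩ := h
  obtain ⟨g', h1', h2'⟩ := h'
  refine ⟨g' * g, ?_, ?_⟩
  · rw [h1, h1', ← actMul, ← op_mul]
  · rw [h2', h2, biActPair]

lemma tensRel_equiv (S : FinRight G) (X : BiAct G H) : Equivalence (tensRel S X) :=
  ⟨tensRel_refl S X, tensRel_symm, tensRel_trans⟩

lemma tens_mk_eq {S : FinRight G} {X : BiAct G H} {p q : S.V × X.V} :
    Quot.mk (tensRel S X) p = Quot.mk (tensRel S X) q ↔ tensRel S X p q := by
  rw [Quot.eq]
  exact (tensRel_equiv S X).eqvGen_iff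

lemma tens_shift {S : FinRight G} {X : BiAct G H} (s : S.V) (g : G) (x : X.V) :
    Quot.mk (tensRel S X) (S.ρ (op g) s, x) = Quot.mk (tensRel S X) (s, X.ρ (g, 1) x) :=
  Quot.sound ⟨g, rfl, rfl⟩

end TensorRel

/-! ### Part B: the tensor functors preserve pullbacks, finite coproducts and epis -/

section PartB

variable {G H : Type} [Group G] [Group H]

theorem tensPCE (X : BiFin G H) : PreservesPCE (tensFunctor G H X.obj) := by
  obtain ⟨X, hX⟩ := X
  refine ⟨⟨actPreservesPullbacks_of_compare _ ?_⟩,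
    fun J _ => ⟨actPreservesCoproducts_of_compare _ ?_⟩, ⟨fun {A B} f hf => ?_⟩⟩
  · -- pullbacks
    intro A B C f g
    constructor
    · intro p q
      induction p using Quot.ind with | _ p => ?_
      induction q using Quot.ind with | _ q => ?_
      obtain ⟨w, x⟩ := p
      obtain ⟨w', y⟩ := q
      intro hpq
      have h1 : Quot.mk (tensRel A X) (w.1.1, x) = Quot.mk (tensRel A X) (w'.1.1, y) :=
        congrArg (fun z => z.val.1) hpq
      have h2 : Quot.mk (tensRel B X) (w.1.2, x) = Quot.mk (tensRel B X) (w'.1.2, y) :=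
        congrArg (fun z => z.val.2) hpq
      obtain ⟨g₁, ha', hy1'⟩ := tens_mk_eq.mp h1
      obtain ⟨g₂, hb', hy2'⟩ := tens_mk_eq.mp h2
      have ha : w.val.1 = A.ρ (op g₁) w'.val.1 := ha'
      have hy1 : y = X.ρ ((g₁ : G), (1 : Hᵐᵒᵖ)) x := hy1'
      have hb : w.val.2 = B.ρ (op g₂) w'.val.2 := hb'
      have hy2 : y = X.ρ ((g₂ : G), (1 : Hᵐᵒᵖ)) x := hy2'
      have e1 : X.ρ (g₂⁻¹ * g₁, 1) x = X.ρ (g₂⁻¹, 1) y := by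
        rw [hy1, biActPair]
      have e2 : X.ρ ((g₂⁻¹ : G), (1 : Hᵐᵒᵖ)) y = x := by
        rw [hy2, biActPair, inv_mul_cancel]
        exact actOne X x
      have hg : g₂ = g₁ := inv_mul_eq_one.mp (hX _ x (e1.trans e2))
      rw [hg] at hb
      show Quot.mk (tensRel (cpt f g) X) (w, x) = Quot.mk (tensRel (cpt f g) X) (w', y)
      refine tens_mk_eq.mpr ⟨g₁, ?_, hy1⟩
      apply Subtype.ext
      exact Prod.ext_iff.mpr ⟨ha, hb⟩
    · rintro ⟨⟨u, v⟩, huv⟩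
      revert huv
      induction u using Quot.ind with | _ u => ?_
      induction v using Quot.ind with | _ v => ?_
      obtain ⟨a, x⟩ := u
      obtain ⟨b, y⟩ := v
      intro huv
      have huv' : Quot.mk (tensRel C X) (f.hom a, x) = Quot.mk (tensRel C X) (g.hom b, y) := huv
      obtain ⟨c, hc1', hc2'⟩ := tens_mk_eq.mp huv'
      have hc1 : f.hom a = C.ρ (op c) (g.hom b) := hc1'
      have hc2 : y = X.ρ ((c : G), (1 : Hᵐᵒᵖ)) x := hc2'
      refine ⟨Quot.mk _ (⟨(a, B.ρ (op c) b), ?_⟩, x), ?_⟩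
      · rw [actHomComm g (op c) b]
        exact hc1
      · apply Subtype.ext
        refine Prod.ext_iff.mpr ⟨rfl, ?_⟩
        show Quot.mk (tensRel B X) (B.ρ (op c) b, x) = Quot.mk (tensRel B X) (b, y)
        exact tens_mk_eq.mpr ⟨c, rfl, hc2⟩
  · -- coproducts
    intro A
    constructor
    · intro p q
      obtain ⟨j, u⟩ := p
      obtain ⟨j', v⟩ := q
      induction u using Quot.ind with | _ u => ?_
      induction v using Quot.ind with | _ v => ?_
      obtain ⟨s, x⟩ := u
      obtain ⟨s', y⟩ := v
      intro h
      have h' : Quot.mk (tensRel (cc A) X) (⟨j, s⟩, x)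
          = Quot.mk (tensRel (cc A) X) (⟨j', s'⟩, y) := h
      obtain ⟨c, hc1', hc2'⟩ := tens_mk_eq.mp h'
      have hc1 : (⟨j, s⟩ : ccT A) = ⟨j', (A j').ρ (op c) s'⟩ := hc1'
      have hc2 : y = X.ρ ((c : G), (1 : Hᵐᵒᵖ)) x := hc2'
      obtain ⟨hj, hval⟩ := Sigma.mk.inj_iff.mp hc1
      subst hj
      have hval' : s = (A j).ρ (op c) s' := eq_of_heq hval
      have : Quot.mk (tensRel (A j) X) (s, x) = Quot.mk (tensRel (A j) X) (s', y) :=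
        tens_mk_eq.mpr ⟨c, hval', hc2⟩
      rw [this]
    · intro q
      induction q using Quot.ind with | _ q => ?_
      obtain ⟨⟨j, s⟩, x⟩ := q
      exact ⟨⟨j, Quot.mk _ (s, x)⟩, rfl⟩
  · -- epis
    rw [actEpi_iff_surjective] at hf ⊢
    intro q
    induction q using Quot.ind with | _ q => ?_
    obtain ⟨t, x⟩ := q
    obtain ⟨s, hs⟩ := hf t
    refine ⟨Quot.mk _ (s, x), ?_⟩
    show Quot.mk (tensRel B X) (f.hom s, x) = Quot.mk (tensRel B X) (t, x)
    rw [hs]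

end PartB

-- PAPER-RECON
/-! ### Part A: reconstruction of a PCE functor as a tensor functor -/

section PartA

variable {G H : Type} [Group G] [Group H] [Fintype G]

/-- `G` as a right `G`-set via right translation. -/
noncomputable def Ghat (G : Type) [Group G] [Fintype G] : FinRight G where
  V := FintypeCat.of G
  ρ :=
    { toFun := fun m => FintypeCat.homMk fun a => HMul.hMul (α := G) (β := G) a m.unop
      map_one' := by
        apply FintypeCat.hom_ext; intro a
        exact mul_one _
      map_mul' := by
        intro m n
        apply FintypeCat.hom_ext; intro a
        exact (mul_assoc _ n.unop m.unop).symm }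

/-- Left translation by `g`, as a morphism of right `G`-sets. -/
noncomputable def lmul (g : G) : Ghat G ⟶ Ghat G where
  hom := FintypeCat.homMk fun a => HMul.hMul (α := G) (β := G) g a
  comm := by
    intro m
    apply FintypeCat.hom_ext; intro a
    exact (mul_assoc g a m.unop).symm

lemma lmul_one : lmul (G := G) 1 = 𝟙 (Ghat G) := by
  apply Action.hom_ext
  apply FintypeCat.hom_ext; intro a
  exact one_mul (M := G) _

lemma lmul_comp (g g' : G) : lmul g' ≫ lmul g = lmul (g * g') := by
  apply Action.hom_ext
  apply FintypeCat.hom_ext; intro a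
  exact (mul_assoc g g' a).symm

/-- The orbit morphism `Ĝ ⟶ S` attached to a point `s` of `S`. -/
noncomputable def hat (S : FinRight G) (s : S.V) : Ghat G ⟶ S where
  hom := FintypeCat.homMk fun a => S.ρ (op a) s
  comm := by
    intro m
    apply FintypeCat.hom_ext; intro a
    exact actMul S m (op a) s

lemma hat_lmul (S : FinRight G) (s : S.V) (g : G) :
    lmul g ≫ hat S s = hat S (S.ρ (op g) s) := by
  apply Action.hom_ext
  apply FintypeCat.hom_ext; intro a
  exact actMul S (op a) (op g) s

lemma hat_comp {S S' : FinRight G} (f : S ⟶ S') (s : S.V) :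
    hat S s ≫ f = hat S' (f.hom s) := by
  apply Action.hom_ext
  apply FintypeCat.hom_ext; intro a
  show f.hom (S.ρ (op a) s) = S'.ρ (op a) (f.hom s)
  exact actHomComm f _ s

/-- The one-point right `G`-set. -/
noncomputable def ptG (G : Type) [Group G] : FinRight G where
  V := FintypeCat.of PUnit
  ρ :=
    { toFun := fun _ => FintypeCat.homMk id
      map_one' := by apply FintypeCat.hom_ext; intro p; rfl
      map_mul' := fun _ _ => by apply FintypeCat.hom_ext; intro p; rfl }

noncomputable def toPt (G : Type) [Group G] [Fintype G] : Ghat G ⟶ ptG G where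
  hom := FintypeCat.homMk fun _ => PUnit.unit
  comm := by intro m; apply FintypeCat.hom_ext; intro a; rfl

/-- The canonical surjection `⊔_{s ∈ S} Ĝ ⟶ S`. -/
noncomputable def satur (S : FinRight G) : cc (fun _ : S.V => Ghat G) ⟶ S where
  hom := FintypeCat.homMk fun p => S.ρ (op p.2) p.1
  comm := by
    intro m
    apply FintypeCat.hom_ext; intro p
    exact actMul S m (op p.2) p.1

lemma satur_surjective (S : FinRight G) : Function.Surjective (satur S).hom :=
  fun s => ⟨⟨s, (1 : G)⟩, by show S.ρ (op (1 : G)) s = s; rw [op_one, actOne]⟩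

lemma satur_incl (S : FinRight G) (s : S.V) :
    ccIncl (fun _ : S.V => Ghat G) s ≫ satur S = hat S s := by
  apply Action.hom_ext
  apply FintypeCat.hom_ext; intro a
  rfl

lemma hat_cptFst {S : FinRight G} (f g : Ghat G ⟶ S) (w : (cpt f g).V) :
    hat (cpt f g) w ≫ cptFst f g = lmul (G := G) w.val.1 := by
  apply Action.hom_ext
  apply FintypeCat.hom_ext; intro a
  rfl

lemma hat_cptSnd {S : FinRight G} (f g : Ghat G ⟶ S) (w : (cpt f g).V) :
    hat (cpt f g) w ≫ cptSnd f g = lmul (G := G) w.val.2 := by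
  apply Action.hom_ext
  apply FintypeCat.hom_ext; intro a
  rfl

/-- The canonical iso `⊔_{c ∈ G} Ĝ ≅ Ĝ ×_{pt} Ĝ`. -/
noncomputable def wMap (G : Type) [Group G] [Fintype G] :
    cc (fun _ : G => Ghat G) ⟶ cpt (toPt G) (toPt G) where
  hom := FintypeCat.homMk fun p => ⟨(HMul.hMul (α := G) (β := G) p.1 p.2, p.2), rfl⟩
  comm := by
    intro m
    apply FintypeCat.hom_ext; intro p
    apply Subtype.ext
    exact Prod.ext_iff.mpr ⟨(mul_assoc (G := G) _ _ _).symm, rfl⟩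

lemma wMap_bijective : Function.Bijective (wMap G).hom := by
  constructor
  · intro p q h
    obtain ⟨c, a⟩ := p
    obtain ⟨c', a'⟩ := q
    have h2 : a = a' := congrArg (fun z => z.val.2) h
    subst h2
    have h1 : HMul.hMul (α := G) (β := G) c a = HMul.hMul (α := G) (β := G) c' a :=
      congrArg (fun z => z.val.1) h
    rw [show c = c' from mul_right_cancel h1]
  · rintro ⟨⟨u, v⟩, -⟩
    refine ⟨⟨HMul.hMul (α := G) (β := G) u (Inv.inv (α := G) v), v⟩, ?_⟩
    apply Subtype.ext
    exact Prod.ext_iff.mpr ⟨inv_mul_cancel_right (G := G) _ _, rfl⟩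

lemma incl_wMap_fst (c : G) :
    ccIncl (fun _ : G => Ghat G) c ≫ wMap G ≫ cptFst (toPt G) (toPt G) = lmul c := by
  apply Action.hom_ext
  apply FintypeCat.hom_ext; intro a
  rfl

lemma incl_wMap_snd (c : G) :
    ccIncl (fun _ : G => Ghat G) c ≫ wMap G ≫ cptSnd (toPt G) (toPt G) = 𝟙 (Ghat G) := by
  apply Action.hom_ext
  apply FintypeCat.hom_ext; intro a
  rfl

/-- The reconstructed biset `F(Ĝ)` with its left `G`- and right `H`-actions. -/
noncomputable def reconX (F : FinRight G ⥤ FinRight H) : BiAct G H where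
  V := (F.obj (Ghat G)).V
  ρ :=
    { toFun := fun m => FintypeCat.homMk fun v => (F.map (lmul m.1)).hom ((F.obj (Ghat G)).ρ m.2 v)
      map_one' := by
        apply FintypeCat.hom_ext; intro v
        show (F.map (lmul (1 : G))).hom ((F.obj (Ghat G)).ρ (1 : Hᵐᵒᵖ) v) = v
        rw [actOne, lmul_one, F.map_id]
        rfl
      map_mul' := by
        intro a b
        apply FintypeCat.hom_ext; intro v
        show (F.map (lmul (a.1 * b.1))).hom ((F.obj (Ghat G)).ρ (a.2 * b.2) v)
          = (F.map (lmul a.1)).hom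
              ((F.obj (Ghat G)).ρ a.2 ((F.map (lmul b.1)).hom ((F.obj (Ghat G)).ρ b.2 v)))
        rw [← lmul_comp, F.map_comp, actCompApp, actMul]
        exact congrArg (F.map (lmul a.1)).hom (actHomComm (F.map (lmul b.1)) a.2 _) }

lemma reconX_rho (F : FinRight G ⥤ FinRight H) (c : G) (v : (F.obj (Ghat G)).V) :
    (reconX F).ρ ((c : G), (1 : Hᵐᵒᵖ)) v = (F.map (lmul c)).hom v := by
  show (F.map (lmul c)).hom ((F.obj (Ghat G)).ρ (1 : Hᵐᵒᵖ) v) = _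
  rw [actOne]

lemma recon_free (F : FinRight G ⥤ FinRight H) (hF : PreservesPCE F) :
    LeftFree (reconX F) := by
  intro g x hx
  have hx' : (F.map (lmul g)).hom x = x := by
    rw [← reconX_rho F g x]
    exact hx
  haveI := hF.1.some
  haveI := (hF.2.1 G).some
  have hbcc := ccCompare_bijective F (fun _ : G => Ghat G)
  have hbcpt := cptCompare_bijective F (toPt G) (toPt G)
  have hbw := actBijective_of_iso (F.mapIso (actIsoOfBijective (wMap G) wMap_bijective))
  have chain : ∀ (c : G) (pr : cpt (toPt G) (toPt G) ⟶ Ghat G) (ξ : (F.obj (Ghat G)).V),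
      (F.map pr).hom ((F.map (wMap G)).hom ((F.map (ccIncl (fun _ : G => Ghat G) c)).hom ξ))
        = (F.map (ccIncl (fun _ : G => Ghat G) c ≫ wMap G ≫ pr)).hom ξ := by
    intro c pr ξ
    rw [F.map_comp, F.map_comp, actCompApp, actCompApp]
  have key := hbcpt.1.comp (hbw.1.comp hbcc.1)
  have him : ((cptCompare F (toPt G) (toPt G)).hom ∘ (F.map (wMap G)).hom ∘
        (ccCompare F (fun _ : G => Ghat G)).hom) ⟨g, x⟩
      = ((cptCompare F (toPt G) (toPt G)).hom ∘ (F.map (wMap G)).hom ∘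
        (ccCompare F (fun _ : G => Ghat G)).hom) ⟨1, x⟩ := by
    apply Subtype.ext
    refine Prod.ext_iff.mpr ⟨?_, ?_⟩
    · show (F.map (cptFst (toPt G) (toPt G))).hom
          ((F.map (wMap G)).hom ((F.map (ccIncl (fun _ : G => Ghat G) g)).hom x))
        = (F.map (cptFst (toPt G) (toPt G))).hom
          ((F.map (wMap G)).hom ((F.map (ccIncl (fun _ : G => Ghat G) 1)).hom x))
      erw [chain, chain, incl_wMap_fst, incl_wMap_fst, lmul_one, F.map_id,
        Action.id_hom, FintypeCat.id_apply]
      exact hx'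
    · show (F.map (cptSnd (toPt G) (toPt G))).hom
          ((F.map (wMap G)).hom ((F.map (ccIncl (fun _ : G => Ghat G) g)).hom x))
        = (F.map (cptSnd (toPt G) (toPt G))).hom
          ((F.map (wMap G)).hom ((F.map (ccIncl (fun _ : G => Ghat G) 1)).hom x))
      erw [chain, chain, incl_wMap_snd]
  have := key him
  exact (Sigma.mk.inj_iff.mp this).1

/-- The comparison map `S ⊗_G F(Ĝ) ⟶ F(S)`. -/
noncomputable def eta (F : FinRight G ⥤ FinRight H) (S : FinRight G) :
    tensObj S (reconX F) ⟶ F.obj S where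
  hom := FintypeCat.homMk <| Quot.lift (fun p => (F.map (hat S p.1)).hom p.2) (by
    rintro ⟨s, x⟩ ⟨t, y⟩ ⟨g, h1, h2⟩
    have h1' : s = S.ρ (op g) t := h1
    have h2' : y = (reconX F).ρ ((g : G), (1 : Hᵐᵒᵖ)) x := h2
    show (F.map (hat S s)).hom x = (F.map (hat S t)).hom y
    erw [h2', reconX_rho, h1', ← hat_lmul, F.map_comp, actCompApp])
  comm := by
    intro m
    apply FintypeCat.hom_ext; intro q
    induction q using Quot.ind with | _ p => ?_
    obtain ⟨s, x⟩ := p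
    show (F.map (hat S s)).hom ((reconX F).ρ ((1 : G), m) x)
      = (F.obj S).ρ m ((F.map (hat S s)).hom x)
    have : (reconX F).ρ ((1 : G), m) x = (F.obj (Ghat G)).ρ m x := by
      show (F.map (lmul (1 : G))).hom ((F.obj (Ghat G)).ρ m x) = _
      rw [lmul_one, F.map_id]
      rfl
    rw [this]
    exact actHomComm (F.map (hat S s)) m x

lemma eta_surjective (F : FinRight G ⥤ FinRight H) (hF : PreservesPCE F) (S : FinRight G) :
    Function.Surjective (eta F S).hom := by
  haveI := (hF.2.1 S.V).some
  haveI := hF.2.2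
  haveI : Epi (satur S) := (actEpi_iff_surjective _).mpr (satur_surjective S)
  have hFe : Function.Surjective (F.map (satur S)).hom :=
    (actEpi_iff_surjective _).mp (hF.2.2.preserves _)
  intro v
  obtain ⟨u, hu⟩ := hFe v
  obtain ⟨p, hp⟩ := (ccCompare_bijective F (fun _ : S.V => Ghat G)).2 u
  obtain ⟨s, ξ⟩ := p
  refine ⟨Quot.mk _ (s, ξ), ?_⟩
  show (F.map (hat S s)).hom ξ = v
  rw [← satur_incl S s, F.map_comp, actCompApp]
  rw [show (F.map (ccIncl (fun _ : S.V => Ghat G) s)).hom ξ = u from hp, hu]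

lemma eta_injective (F : FinRight G ⥤ FinRight H) (hF : PreservesPCE F) (S : FinRight G) :
    Function.Injective (eta F S).hom := by
  haveI := hF.1.some
  haveI := hF.2.2
  intro p q
  induction p using Quot.ind with | _ p => ?_
  induction q using Quot.ind with | _ q => ?_
  obtain ⟨s, x⟩ := p
  obtain ⟨t, y⟩ := q
  intro h
  have h' : (F.map (hat S s)).hom x = (F.map (hat S t)).hom y := h
  obtain ⟨u, hu⟩ := (cptCompare_bijective F (hat S s) (hat S t)).2 ⟨(x, y), h'⟩
  have hu1 : (F.map (cptFst (hat S s) (hat S t))).hom u = x :=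
    congrArg (fun z => z.val.1) hu
  have hu2 : (F.map (cptSnd (hat S s) (hat S t))).hom u = y :=
    congrArg (fun z => z.val.2) hu
  haveI := (hF.2.1 ((cpt (hat S s) (hat S t)).V : Type)).some
  haveI : Epi (satur (cpt (hat S s) (hat S t))) :=
    (actEpi_iff_surjective _).mpr (satur_surjective _)
  have hFe : Function.Surjective (F.map (satur (cpt (hat S s) (hat S t)))).hom :=
    (actEpi_iff_surjective _).mp (hF.2.2.preserves _)
  obtain ⟨u', hu'⟩ := hFe u
  obtain ⟨pp, hpp⟩ :=
    (ccCompare_bijective F (fun _ : ((cpt (hat S s) (hat S t)).V : Type) => Ghat G)).2 u'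
  obtain ⟨w, ξ⟩ := pp
  have hchain : ∀ pr : cpt (hat S s) (hat S t) ⟶ Ghat G,
      (F.map pr).hom u = (F.map (ccIncl _ w ≫ satur _ ≫ pr)).hom ξ := by
    intro pr
    rw [F.map_comp, F.map_comp, actCompApp, actCompApp]
    rw [show (F.map (ccIncl (fun _ : ((cpt (hat S s) (hat S t)).V : Type) => Ghat G) w)).hom ξ
      = u' from hpp, hu']
  have hfst : ccIncl _ w ≫ satur (cpt (hat S s) (hat S t)) ≫ cptFst (hat S s) (hat S t)
      = lmul (G := G) w.val.1 := by
    rw [← Category.assoc, satur_incl, hat_cptFst]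
  have hsnd : ccIncl _ w ≫ satur (cpt (hat S s) (hat S t)) ≫ cptSnd (hat S s) (hat S t)
      = lmul (G := G) w.val.2 := by
    rw [← Category.assoc, satur_incl, hat_cptSnd]
  have hx2 : x = (F.map (lmul (G := G) w.val.1)).hom ξ := by
    rw [← hu1, hchain (cptFst (hat S s) (hat S t)), hfst]
  have hy2 : y = (F.map (lmul (G := G) w.val.2)).hom ξ := by
    rw [← hu2, hchain (cptSnd (hat S s) (hat S t)), hsnd]
  have hw : S.ρ (op w.val.1) s = S.ρ (op w.val.2) t := w.property
  calc Quot.mk (tensRel S (reconX F)) (s, x)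
      = Quot.mk (tensRel S (reconX F)) (S.ρ (op w.val.1) s, ξ) := by
        erw [hx2, ← reconX_rho]
        exact (tens_shift (X := reconX F) s w.val.1 ξ).symm
    _ = Quot.mk (tensRel S (reconX F)) (S.ρ (op w.val.2) t, ξ) := by rw [hw]
    _ = Quot.mk (tensRel S (reconX F)) (t, y) := by
        erw [hy2, ← reconX_rho]
        exact tens_shift (X := reconX F) t w.val.2 ξ

/-- The natural isomorphism `- ⊗_G F(Ĝ) ≅ F`. -/
noncomputable def reconIso (F : FinRight G ⥤ FinRight H) (hF : PreservesPCE F) :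
    tensFunctor G H (reconX F) ≅ F := by
  refine NatIso.ofComponents
    (fun S => actIsoOfBijective (eta F S) ⟨eta_injective F hF S, eta_surjective F hF S⟩) ?_
  intro S S' f
  apply Action.hom_ext
  apply FintypeCat.hom_ext; intro q
  induction q using Quot.ind with | _ p => ?_
  obtain ⟨s, x⟩ := p
  show (F.map (hat S' (f.hom s))).hom x = (F.map f).hom ((F.map (hat S s)).hom x)
  erw [← actCompApp, ← F.map_comp, hat_comp]

theorem recon_exists (F : FinRight G ⥤ FinRight H) (hF : PreservesPCE F) :
    ∃ X : BiFin G H, Nonempty (tensFunctor G H X.obj ≅ F) :=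
  ⟨⟨reconX F, recon_free F hF⟩, ⟨reconIso F hF⟩⟩

end PartA

-- PAPER-FINAL
/-! ### Part C: the equivalence -/

section PartC

variable {G H : Type} [Group G] [Group H] [Fintype G]

/-- Evaluation `Ĝ ⊗_G X ⟶ X`, `⟦(a, x)⟧ ↦ a • x`. -/
noncomputable def tensEval (X : BiAct G H) : TensSet (Ghat G) X → X.V :=
  Quot.lift (fun p => X.ρ ((p.1 : G), (1 : Hᵐᵒᵖ)) p.2) (by
    rintro ⟨a, x⟩ ⟨b, y⟩ ⟨g, h1, h2⟩
    have h1' : (a : G) = HMul.hMul (α := G) (β := G) b g := h1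
    have h2' : y = X.ρ ((g : G), (1 : Hᵐᵒᵖ)) x := h2
    show X.ρ ((a : G), (1 : Hᵐᵒᵖ)) x = X.ρ ((b : G), (1 : Hᵐᵒᵖ)) y
    erw [h1', h2', biActPair])

lemma mk_tensEval (X : BiAct G H) (q : TensSet (Ghat G) X) :
    Quot.mk (tensRel (Ghat G) X) ((1 : G), tensEval X q) = q := by
  induction q using Quot.ind with | _ p => ?_
  obtain ⟨a, x⟩ := p
  exact (Quot.sound ⟨a, (one_mul (M := G) a).symm, rfl⟩).symm

lemma tensEval_act (X' : BiAct G H) (m1 : G) (m2 : Hᵐᵒᵖ) (z : TensSet (Ghat G) X') :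
    tensEval X' (((tensFunctor G H X').map (lmul m1)).hom ((tensObj (Ghat G) X').ρ m2 z))
      = X'.ρ (m1, m2) (tensEval X' z) := by
  induction z using Quot.ind with | _ p => ?_
  obtain ⟨a, y⟩ := p
  show X'.ρ (HMul.hMul (α := G) (β := G) m1 a, (1 : Hᵐᵒᵖ)) (X'.ρ ((1 : G), m2) y)
    = X'.ρ (m1, m2) (X'.ρ ((a : G), (1 : Hᵐᵒᵖ)) y)
  erw [← actMul, ← actMul, Prod.mk_mul_mk, Prod.mk_mul_mk, mul_one, mul_one, one_mul]

/-- From a natural transformation between tensor functors, recover a biset morphism. -/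
noncomputable def reconPhi {X X' : BiAct G H}
    (τ : tensFunctor G H X ⟶ tensFunctor G H X') : X ⟶ X' where
  hom := FintypeCat.homMk fun x => tensEval X' ((τ.app (Ghat G)).hom (Quot.mk (tensRel (Ghat G) X) ((1 : G), x)))
  comm := by
    intro m
    apply FintypeCat.hom_ext; intro x
    obtain ⟨m1, m2⟩ := m
    have step1 : Quot.mk (tensRel (Ghat G) X) ((1 : G), X.ρ (m1, m2) x)
        = ((tensFunctor G H X).map (lmul m1)).hom
            ((tensObj (Ghat G) X).ρ m2 (Quot.mk (tensRel (Ghat G) X) ((1 : G), x))) := by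
      show Quot.mk (tensRel (Ghat G) X) ((1 : G), X.ρ (m1, m2) x)
        = Quot.mk (tensRel (Ghat G) X)
            (HMul.hMul (α := G) (β := G) m1 1, X.ρ ((1 : G), m2) x)
      rw [mul_one]
      have hs := tens_shift (S := Ghat G) (X := X) ((1 : G)) m1 (X.ρ ((1 : G), m2) x)
      have hGm : (Ghat G).ρ (op m1) ((1 : G)) = m1 := one_mul (M := G) m1
      rw [hGm] at hs
      rw [hs, ← actMul, Prod.mk_mul_mk, mul_one, one_mul]
    show tensEval X' ((τ.app (Ghat G)).hom (Quot.mk (tensRel (Ghat G) X) ((1 : G), X.ρ (m1, m2) x)))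
      = X'.ρ (m1, m2)
          (tensEval X' ((τ.app (Ghat G)).hom (Quot.mk (tensRel (Ghat G) X) ((1 : G), x))))
    calc tensEval X' ((τ.app (Ghat G)).hom (Quot.mk (tensRel (Ghat G) X) ((1 : G), X.ρ (m1, m2) x)))
        = tensEval X' ((τ.app (Ghat G)).hom (((tensFunctor G H X).map (lmul m1)).hom
            ((tensObj (Ghat G) X).ρ m2 (Quot.mk (tensRel (Ghat G) X) ((1 : G), x))))) := by
          rw [step1]
      _ = tensEval X' (((tensFunctor G H X').map (lmul m1)).hom ((τ.app (Ghat G)).hom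
            ((tensObj (Ghat G) X).ρ m2 (Quot.mk (tensRel (Ghat G) X) ((1 : G), x))))) :=
          congrArg (tensEval X') (actEqHomApp (τ.naturality (lmul m1)) _)
      _ = tensEval X' (((tensFunctor G H X').map (lmul m1)).hom ((tensObj (Ghat G) X').ρ m2
            ((τ.app (Ghat G)).hom (Quot.mk (tensRel (Ghat G) X) ((1 : G), x))))) :=
          congrArg (fun z => tensEval X' (((tensFunctor G H X').map (lmul m1)).hom z))
            (actHomComm (τ.app (Ghat G)) m2 _)
      _ = X'.ρ (m1, m2)
            (tensEval X' ((τ.app (Ghat G)).hom (Quot.mk (tensRel (Ghat G) X) ((1 : G), x)))) :=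
          tensEval_act X' m1 m2 _

lemma reconPhi_spec {X X' : BiAct G H} (τ : tensFunctor G H X ⟶ tensFunctor G H X')
    (S : FinRight G) (s : S.V) (x : X.V) :
    (τ.app S).hom (Quot.mk (tensRel S X) (s, x))
      = Quot.mk (tensRel S X') (s, (reconPhi τ).hom x) := by
  have hτ1 : (τ.app (Ghat G)).hom (Quot.mk (tensRel (Ghat G) X) ((1 : G), x))
      = Quot.mk (tensRel (Ghat G) X') ((1 : G), (reconPhi τ).hom x) :=
    (mk_tensEval X' _).symm
  calc (τ.app S).hom (Quot.mk (tensRel S X) (s, x))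
      = (τ.app S).hom (((tensFunctor G H X).map (hat S s)).hom
          (Quot.mk (tensRel (Ghat G) X) ((1 : G), x))) := by
        apply congrArg (τ.app S).hom
        show Quot.mk (tensRel S X) (s, x) = Quot.mk (tensRel S X) (S.ρ (op (1 : G)) s, x)
        rw [op_one, actOne]
    _ = ((tensFunctor G H X').map (hat S s)).hom
          ((τ.app (Ghat G)).hom (Quot.mk (tensRel (Ghat G) X) ((1 : G), x))) :=
        actEqHomApp (τ.naturality (hat S s)) _
    _ = ((tensFunctor G H X').map (hat S s)).hom
          (Quot.mk (tensRel (Ghat G) X') ((1 : G), (reconPhi τ).hom x)) := by rw [hτ1]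
    _ = (show ((tensFunctor G H X').obj S).V from Quot.mk (tensRel S X') (s, (reconPhi τ).hom x)) := by
        show Quot.mk (tensRel S X') (S.ρ (op (1 : G)) s, (reconPhi τ).hom x) = _
        rw [op_one, actOne]

end PartC

section Assemble

lemma pce_of_iso {C D : Type*} [Category C] [Category D] {F F' : C ⥤ D}
    (e : F ≅ F') (hF : PreservesPCE F) : PreservesPCE F' := by
  obtain ⟨⟨h1⟩, h2, h3⟩ := hF
  refine ⟨?_, fun J _ => ?_, ?_⟩
  · haveI := h1
    exact ⟨preservesLimitsOfShape_of_natIso e⟩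
  · obtain ⟨hJ⟩ := h2 J
    haveI := hJ
    exact ⟨preservesColimitsOfShape_of_natIso e⟩
  · haveI := h3
    exact Functor.preservesEpimorphisms.of_iso e

end Assemble

/-- Lemma `PropGlo`. For finite groups `G` and `H`, a functor
`F : Fin_G → Fin_H` preserves pullbacks, epimorphisms and finite coproducts if and only
if it is naturally isomorphic to `- ×_G X` for some `(G,H)`-biset `X` with free left
`G`-action; moreover `X ↦ - ×_G X` induces an equivalence
`^G Fin_H ≃ Fun_pce(Fin_G, Fin_H)`. -/
theorem tensor_equivalence (G H : Type) [Group G] [Group H] [Fintype G] [Fintype H] :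
    ∃ h : ∀ X : BiFin G H, PreservesPCE (tensFunctor G H X.obj),
      (∀ F : FinRight G ⥤ FinRight H,
          PreservesPCE F ↔ ∃ X : BiFin G H, Nonempty (F ≅ tensFunctor G H X.obj)) ∧
      (tensEquivFunctor G H h).IsEquivalence := by
  refine ⟨fun X => tensPCE X, ?_, ?_⟩
  · intro F
    constructor
    · intro hF
      obtain ⟨X, ⟨e⟩⟩ := recon_exists F hF
      exact ⟨X, ⟨e.symm⟩⟩
    · rintro ⟨X, ⟨e⟩⟩
      exact pce_of_iso e.symm (tensPCE X)
  · haveI hfaith : (tensEquivFunctor G H fun X => tensPCE X).Faithful := by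
      refine ⟨?_⟩
      intro X X' φ ψ hφψ
      have hφψ' : (((tensEquivFunctor G H fun X => tensPCE X).map φ).hom :
          tensFunctor G H X.obj ⟶ tensFunctor G H X'.obj)
          = ((tensEquivFunctor G H fun X => tensPCE X).map ψ).hom := by rw [hφψ]
      apply ObjectProperty.hom_ext
      apply Action.hom_ext
      apply FintypeCat.hom_ext; intro x
      have h1 : Quot.mk (tensRel (Ghat G) X'.obj) ((1 : G), φ.hom.hom x)
          = Quot.mk (tensRel (Ghat G) X'.obj) ((1 : G), ψ.hom.hom x) :=
        actEqHomApp (congrArg (fun (τ : tensFunctor G H X.obj ⟶ tensFunctor G H X'.obj) =>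
          τ.app (Ghat G)) hφψ') (Quot.mk (tensRel (Ghat G) X.obj) ((1 : G), x))
      obtain ⟨c, hc1', hc2'⟩ := tens_mk_eq.mp h1
      have hc : (1 : G) = c := hc1'.trans (one_mul (M := G) c)
      have hc2 : ψ.hom.hom x = X'.obj.ρ ((c : G), (1 : Hᵐᵒᵖ)) (φ.hom.hom x) := hc2'
      rw [hc2, ← hc]
      exact (actOne X'.obj (φ.hom.hom x)).symm
    haveI hfull : (tensEquivFunctor G H fun X => tensPCE X).Full := by
      refine ⟨?_⟩
      intro X X' τ
      refine ⟨ObjectProperty.homMk (reconPhi (X := X.obj) (X' := X'.obj) τ.hom), ?_⟩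
      apply ObjectProperty.hom_ext
      apply NatTrans.ext
      funext S
      apply Action.hom_ext
      apply FintypeCat.hom_ext; intro q
      induction q using Quot.ind with | _ p => ?_
      obtain ⟨s, x⟩ := p
      exact (reconPhi_spec (X := X.obj) (X' := X'.obj) τ.hom S s x).symm
    haveI hes : (tensEquivFunctor G H fun X => tensPCE X).EssSurj := by
      refine ⟨fun Fp => ?_⟩
      obtain ⟨X, ⟨e⟩⟩ := recon_exists Fp.obj Fp.property
      exact ⟨X, ⟨ObjectProperty.isoMk _ e⟩⟩
    exact {}

end Paper
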